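/- Let A and B be self-adjoint n×n complex matrices with eigenvalues listed in increasing order λ₁(A) ≤ ⋯ ≤ λₙ(A) and λ₁(B) ≤ ⋯ ≤ λₙ(B). Then for every k ∈ {1,…,n}, |λ_k(A) − λ_k(B)| ≤ ‖A − B‖, where ‖·‖ is the operator norm. -/

import Mathlib

/-- The `ℓ² → ℓ²` operator norm of a complex matrix. -/
noncomputable def l2OpNorm2 {n : ℕ} (M : Matrix (Fin n) (Fin n) ℂ) : ℝ :=
  ‖LinearMap.toContinuousLinearMap (Matrix.toEuclideanLin M)‖

open scoped InnerProductSpace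

namespace WeylAux

lemma quad_repr {n : ℕ} (T : EuclideanSpace ℂ (Fin n) →ₗ[ℂ] EuclideanSpace ℂ (Fin n))
    (hT : T.IsSymmetric) (b : OrthonormalBasis (Fin n) ℂ (EuclideanSpace ℂ (Fin n)))
    (lam : Fin n → ℝ) (hb : ∀ i, T (b i) = (lam i : ℂ) • b i)
    (v : EuclideanSpace ℂ (Fin n)) :
    RCLike.re (⟪v, T v⟫_ℂ) = ∑ j, lam j * ‖b.repr v j‖ ^ 2 := by
  have hrepr : ∀ j, b.repr (T v) j = (lam j : ℂ) * b.repr v j := by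
    intro j
    rw [b.repr_apply_apply, b.repr_apply_apply, ← hT (b j) v, hb j, inner_smul_left]
    simp
  have h1 : ⟪v, T v⟫_ℂ = ∑ j, (starRingEnd ℂ) (b.repr v j) * ((lam j : ℂ) * b.repr v j) := by
    rw [← LinearIsometryEquiv.inner_map_map b.repr v (T v), PiLp.inner_apply]
    simp_rw [hrepr]
    simp only [RCLike.inner_apply']
  rw [h1, map_sum]
  congr 1; ext j
  have h2 : (starRingEnd ℂ) (b.repr v j) * ((lam j : ℂ) * b.repr v j)
      = (lam j : ℂ) * ((starRingEnd ℂ) (b.repr v j) * b.repr v j) := by ring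
  rw [h2, RCLike.conj_mul]
  simp [RCLike.ofReal_mul, Complex.ofReal_re, RCLike.mul_re]
  exact Or.inl (by norm_cast)

lemma repr_zero_of_not_mem {n : ℕ} (b : OrthonormalBasis (Fin n) ℂ (EuclideanSpace ℂ (Fin n)))
    (s : Finset (Fin n)) (v : EuclideanSpace ℂ (Fin n))
    (hv : v ∈ Submodule.span ℂ (b '' ↑s)) {j : Fin n} (hj : j ∉ s) :
    b.repr v j = 0 := by
  rw [b.repr_apply_apply]
  induction hv using Submodule.span_induction with
  | mem x hx =>
      obtain ⟨i, hi, rfl⟩ := hx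
      exact b.orthonormal.2 (fun h => hj (h ▸ hi))
  | zero => simp
  | add x y _ _ hx hy => rw [inner_add_right, hx, hy, add_zero]
  | smul c x _ hx => rw [inner_smul_right, hx, mul_zero]

lemma sum_sq_repr {n : ℕ} (b : OrthonormalBasis (Fin n) ℂ (EuclideanSpace ℂ (Fin n)))
    (v : EuclideanSpace ℂ (Fin n)) :
    ∑ j, ‖b.repr v j‖ ^ 2 = ‖v‖ ^ 2 := by
  rw [← b.repr.norm_map v, EuclideanSpace.norm_eq, Real.sq_sqrt]
  positivity

/-- quadratic form bound from above on a coordinate subspace -/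
lemma quad_le {n : ℕ} (T : EuclideanSpace ℂ (Fin n) →ₗ[ℂ] EuclideanSpace ℂ (Fin n))
    (hT : T.IsSymmetric) (b : OrthonormalBasis (Fin n) ℂ (EuclideanSpace ℂ (Fin n)))
    (lam : Fin n → ℝ) (hb : ∀ i, T (b i) = (lam i : ℂ) • b i)
    (s : Finset (Fin n)) (c : ℝ) (hc : ∀ i ∈ s, lam i ≤ c)
    (v : EuclideanSpace ℂ (Fin n)) (hv : v ∈ Submodule.span ℂ (b '' ↑s)) (hv1 : ‖v‖ = 1) :
    RCLike.re (⟪v, T v⟫_ℂ) ≤ c := by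
  rw [quad_repr T hT b lam hb v]
  have hzero : ∀ j ∈ (Finset.univ : Finset (Fin n)), j ∉ s → lam j * ‖b.repr v j‖ ^ 2 = 0 := by
    intro j _ hj
    rw [repr_zero_of_not_mem b s v hv hj]
    simp
  rw [← Finset.sum_subset s.subset_univ hzero]
  have hzero' : ∀ j ∈ (Finset.univ : Finset (Fin n)), j ∉ s → ‖b.repr v j‖ ^ 2 = 0 := by
    intro j _ hj
    rw [repr_zero_of_not_mem b s v hv hj]
    simp
  have hsum : ∑ j ∈ s, ‖b.repr v j‖ ^ 2 = 1 := by
    rw [Finset.sum_subset s.subset_univ hzero', sum_sq_repr, hv1, one_pow]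
  calc ∑ j ∈ s, lam j * ‖b.repr v j‖ ^ 2
      ≤ ∑ j ∈ s, c * ‖b.repr v j‖ ^ 2 := by
        apply Finset.sum_le_sum
        intro i hi
        exact mul_le_mul_of_nonneg_right (hc i hi) (by positivity)
    _ = c := by rw [← Finset.mul_sum, hsum, mul_one]

lemma quad_ge {n : ℕ} (T : EuclideanSpace ℂ (Fin n) →ₗ[ℂ] EuclideanSpace ℂ (Fin n))
    (hT : T.IsSymmetric) (b : OrthonormalBasis (Fin n) ℂ (EuclideanSpace ℂ (Fin n)))
    (lam : Fin n → ℝ) (hb : ∀ i, T (b i) = (lam i : ℂ) • b i)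
    (s : Finset (Fin n)) (c : ℝ) (hc : ∀ i ∈ s, c ≤ lam i)
    (v : EuclideanSpace ℂ (Fin n)) (hv : v ∈ Submodule.span ℂ (b '' ↑s)) (hv1 : ‖v‖ = 1) :
    c ≤ RCLike.re (⟪v, T v⟫_ℂ) := by
  have := quad_le (-T) (fun x y => by rw [LinearMap.neg_apply, LinearMap.neg_apply, inner_neg_left, inner_neg_right, hT x y]) b (fun i => -lam i)
    (fun i => by rw [LinearMap.neg_apply, hb i]; push_cast; rw [neg_smul]) s (-c)
    (fun i hi => neg_le_neg (hc i hi)) v hv hv1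
  rw [LinearMap.neg_apply, inner_neg_right, map_neg] at this
  linarith

lemma finrank_span_ortho {n : ℕ} (b : OrthonormalBasis (Fin n) ℂ (EuclideanSpace ℂ (Fin n)))
    (s : Finset (Fin n)) :
    Module.finrank ℂ (Submodule.span ℂ (b '' ↑s)) = s.card := by
  have hli : LinearIndependent ℂ (fun i : (↑s : Set (Fin n)) => b i) :=
    (b.orthonormal.comp Subtype.val Subtype.val_injective).linearIndependent
  rw [Set.image_eq_range, finrank_span_eq_card hli]
  simp


lemma eig_apply {n : ℕ} {A : Matrix (Fin n) (Fin n) ℂ} (hA : A.IsHermitian) (i : Fin n) :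
    Matrix.toEuclideanLin A (hA.eigenvectorBasis i)
      = ((hA.eigenvalues i : ℝ) : ℂ) • hA.eigenvectorBasis i := by
  apply (WithLp.equiv 2 (Fin n → ℂ)).injective
  change Matrix.mulVec A ((WithLp.equiv 2 (Fin n → ℂ)) (hA.eigenvectorBasis i)) = _
  rw [show ((WithLp.equiv 2 (Fin n → ℂ)) (hA.eigenvectorBasis i))
      = ⇑(hA.eigenvectorBasis i) from rfl, hA.mulVec_eigenvectorBasis i]
  ext j
  simp [Complex.real_smul]

lemma one_side {n : ℕ} (A B : Matrix (Fin n) (Fin n) ℂ)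
    (hA : A.IsHermitian) (hB : B.IsHermitian)
    (μ ν : Fin n → ℝ) (hμmono : Monotone μ) (hνmono : Monotone ν)
    (eA eB : Equiv.Perm (Fin n))
    (hμ : μ = hA.eigenvalues ∘ eA) (hν : ν = hB.eigenvalues ∘ eB) (k : Fin n) :
    ν k - μ k ≤ l2OpNorm2 (A - B) := by
  classical
  set bA := hA.eigenvectorBasis
  set bB := hB.eigenvectorBasis
  set sA : Finset (Fin n) := (Finset.Iic k).image eA
  set sB : Finset (Fin n) := (Finset.Ici k).image eB
  set U := Submodule.span ℂ (bA '' ↑sA)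
  set V := Submodule.span ℂ (bB '' ↑sB)
  have hU : Module.finrank ℂ U = (k : ℕ) + 1 := by
    rw [finrank_span_ortho, Finset.card_image_of_injective _ eA.injective, Fin.card_Iic]
  have hV : Module.finrank ℂ V = n - (k : ℕ) := by
    rw [finrank_span_ortho, Finset.card_image_of_injective _ eB.injective, Fin.card_Ici]
  have hsup : Module.finrank ℂ ↥(U ⊔ V) ≤ n := by
    have := Submodule.finrank_le (U ⊔ V)
    rwa [finrank_euclideanSpace_fin] at this
  have hinf : 0 < Module.finrank ℂ ↥(U ⊓ V) := by
    have h := Submodule.finrank_sup_add_finrank_inf_eq U V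
    rw [hU, hV] at h
    have hk : (k : ℕ) < n := k.isLt
    omega
  have : Nontrivial ↥(U ⊓ V) := Module.nontrivial_of_finrank_pos hinf
  obtain ⟨x, hx⟩ := exists_ne (0 : ↥(U ⊓ V))
  have hxne : (x : EuclideanSpace ℂ (Fin n)) ≠ 0 := fun h => hx (Subtype.ext h)
  set v : EuclideanSpace ℂ (Fin n) := (‖(x : EuclideanSpace ℂ (Fin n))‖⁻¹ : ℂ) • x
  have hv1 : ‖v‖ = 1 := by
    simp only [v, norm_smul]
    rw [norm_inv, Complex.norm_real, norm_norm, inv_mul_cancel₀ (norm_ne_zero_iff.2 hxne)]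
  have hvU : v ∈ U := U.smul_mem _ (Submodule.mem_inf.1 x.2).1
  have hvV : v ∈ V := V.smul_mem _ (Submodule.mem_inf.1 x.2).2
  have hsymA : (Matrix.toEuclideanLin A).IsSymmetric :=
    Matrix.isHermitian_iff_isSymmetric.1 hA
  have hsymB : (Matrix.toEuclideanLin B).IsSymmetric :=
    Matrix.isHermitian_iff_isSymmetric.1 hB
  have hup : RCLike.re (⟪v, Matrix.toEuclideanLin A v⟫_ℂ) ≤ μ k := by
    refine quad_le _ hsymA bA hA.eigenvalues (eig_apply hA) sA (μ k) ?_ v hvU hv1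
    intro i hi
    obtain ⟨j, hj, rfl⟩ := Finset.mem_image.1 hi
    have : hA.eigenvalues (eA j) = μ j := by rw [hμ]; rfl
    rw [this]
    exact hμmono (Finset.mem_Iic.1 hj)
  have hlo : ν k ≤ RCLike.re (⟪v, Matrix.toEuclideanLin B v⟫_ℂ) := by
    refine quad_ge _ hsymB bB hB.eigenvalues (eig_apply hB) sB (ν k) ?_ v hvV hv1
    intro i hi
    obtain ⟨j, hj, rfl⟩ := Finset.mem_image.1 hi
    have : hB.eigenvalues (eB j) = ν j := by rw [hν]; rfl
    rw [this]
    exact hνmono (Finset.mem_Ici.1 hj)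
  set L := LinearMap.toContinuousLinearMap (Matrix.toEuclideanLin (A - B))
  have hdiff : Matrix.toEuclideanLin B v - Matrix.toEuclideanLin A v = -(L v) := by
    show _ = -(Matrix.toEuclideanLin (A - B) v)
    rw [map_sub]
    simp
  have key : RCLike.re (⟪v, Matrix.toEuclideanLin B v⟫_ℂ)
      - RCLike.re (⟪v, Matrix.toEuclideanLin A v⟫_ℂ) ≤ l2OpNorm2 (A - B) := by
    rw [← map_sub, ← inner_sub_right, hdiff]
    calc RCLike.re (⟪v, -(L v)⟫_ℂ) ≤ ‖(⟪v, -(L v)⟫_ℂ)‖ := RCLike.re_le_norm _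
      _ ≤ ‖v‖ * ‖-(L v)‖ := norm_inner_le_norm _ _
      _ = ‖L v‖ := by rw [hv1, one_mul, norm_neg]
      _ ≤ ‖L‖ * ‖v‖ := L.le_opNorm v
      _ = l2OpNorm2 (A - B) := by rw [hv1, mul_one]; rfl
  linarith


end WeylAux

lemma l2OpNorm2_sub_comm {n : ℕ} (A B : Matrix (Fin n) (Fin n) ℂ) :
    l2OpNorm2 (B - A) = l2OpNorm2 (A - B) := by
  unfold l2OpNorm2
  rw [show B - A = -(A - B) from (neg_sub A B).symm, map_neg, map_neg, norm_neg]

/-- Weyl's perturbation theorem: if `A`, `B` are self-adjoint (Hermitian)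
`n×n` complex matrices and `μ`, `ν` are the increasing enumerations of their eigenvalues,
then `|μ k − ν k| ≤ ‖A − B‖` for every `k`. -/
theorem stmt2 {n : ℕ} (A B : Matrix (Fin n) (Fin n) ℂ)
    (hA : A.IsHermitian) (hB : B.IsHermitian)
    (μ ν : Fin n → ℝ) (hμmono : Monotone μ) (hνmono : Monotone ν)
    (eA eB : Equiv.Perm (Fin n))
    (hμ : μ = hA.eigenvalues ∘ eA) (hν : ν = hB.eigenvalues ∘ eB) :
    ∀ k : Fin n, |μ k - ν k| ≤ l2OpNorm2 (A - B) := by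
  intro k
  have h1 := WeylAux.one_side A B hA hB μ ν hμmono hνmono eA eB hμ hν k
  have h2 := WeylAux.one_side B A hB hA ν μ hνmono hμmono eB eA hν hμ k
  rw [l2OpNorm2_sub_comm] at h2
  rw [abs_sub_le_iff]
  exact ⟨by linarith, by linarith⟩
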